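/- Let Λ be a countable set of nonnegative reals whose only accumulation point is +∞, and suppose Λ is asymptotically lacunary: there exist a > 0 and x_n → ∞ with Λ ∩ [x_n, x_n + a] = ∅ for all n. Then Λ is type 2: there exists a nonnegative continuous function f vanishing at infinity such that {x : ∑_{λ∈Λ} f(x+λ) < ∞} contains a nonempty interval and {x : ∑_{λ∈Λ} f(x+λ) = ∞} contains a nonempty interval. -/

import Mathlib

open MeasureTheory Filter Set

noncomputable def lacBump (a : ℝ) (c : ℕ → ℝ) (k : ℕ) (t : ℝ) : ℝ :=
  ((k : ℝ) + 1)⁻¹ * max 0 (1 - (3 / a) * |t - (c k - a / 2)|)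

noncomputable def lacF (a : ℝ) (c : ℕ → ℝ) (t : ℝ) : ℝ := ∑' k, lacBump a c k t

lemma lacBump_nonneg (a : ℝ) (c : ℕ → ℝ) (k : ℕ) (t : ℝ) : 0 ≤ lacBump a c k t :=
  mul_nonneg (by positivity) (le_max_left _ _)

lemma lacBump_le {a : ℝ} (ha : 0 < a) (c : ℕ → ℝ) (k : ℕ) (t : ℝ) :
    lacBump a c k t ≤ ((k : ℝ) + 1)⁻¹ := by
  have habs : 0 ≤ (3 / a) * |t - (c k - a / 2)| :=
    mul_nonneg (by positivity) (abs_nonneg _)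
  have h1 : max 0 (1 - (3 / a) * |t - (c k - a / 2)|) ≤ 1 :=
    max_le (by norm_num) (by linarith)
  calc lacBump a c k t ≤ ((k:ℝ)+1)⁻¹ * 1 :=
        mul_le_mul_of_nonneg_left h1 (by positivity)
    _ = ((k:ℝ)+1)⁻¹ := mul_one _

lemma lacBump_ne_zero {a : ℝ} (ha : 0 < a) {c : ℕ → ℝ} {k : ℕ} {t : ℝ}
    (h : lacBump a c k t ≠ 0) : |t - (c k - a / 2)| < a / 3 := by
  by_contra hc
  push_neg at hc
  apply h
  have h1 : (3/a) * (a/3) ≤ (3 / a) * |t - (c k - a / 2)| :=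
    mul_le_mul_of_nonneg_left hc (by positivity)
  have h2 : (3/a) * (a/3) = 1 := by field_simp
  have h3 : 1 - (3 / a) * |t - (c k - a / 2)| ≤ 0 := by linarith
  unfold lacBump
  rw [max_eq_left h3, mul_zero]

lemma lacBump_lower {a : ℝ} (ha : 0 < a) {c : ℕ → ℝ} {k : ℕ} {t : ℝ}
    (h : |t - (c k - a / 2)| < a / 12) :
    3 / 4 * ((k : ℝ) + 1)⁻¹ ≤ lacBump a c k t := by
  have h1 : (3 / a) * |t - (c k - a / 2)| ≤ (3/a) * (a/12) :=
    mul_le_mul_of_nonneg_left h.le (by positivity)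
  have h2 : (3/a) * (a/12) = 1/4 := by field_simp; ring
  have h3 : (3:ℝ)/4 ≤ 1 - (3 / a) * |t - (c k - a / 2)| := by linarith
  have h4 : (3:ℝ)/4 ≤ max 0 (1 - (3 / a) * |t - (c k - a / 2)|) :=
    le_max_of_le_right h3
  unfold lacBump
  calc 3/4 * ((k:ℝ)+1)⁻¹ = ((k:ℝ)+1)⁻¹ * (3/4) := by ring
    _ ≤ ((k:ℝ)+1)⁻¹ * max 0 (1 - (3 / a) * |t - (c k - a / 2)|) :=
      mul_le_mul_of_nonneg_left h4 (by positivity)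

lemma lacC_mono {a : ℝ} (ha : 0 < a) {c : ℕ → ℝ} (hstep : ∀ k, c k + a ≤ c (k+1)) :
    StrictMono c :=
  strictMono_nat_of_lt_succ fun k => by linarith [hstep k]

lemma lacC_gap {a : ℝ} (ha : 0 < a) {c : ℕ → ℝ} (hstep : ∀ k, c k + a ≤ c (k+1))
    {j k : ℕ} (hjk : j < k) : c j + a ≤ c k := by
  induction k with
  | zero => omega
  | succ k ih =>
    rcases Nat.lt_succ_iff_lt_or_eq.mp hjk with h | h
    · have h1 := hstep k; have h2 := ih h; linarith
    · subst h; exact hstep j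

lemma lacBump_unique {a : ℝ} (ha : 0 < a) {c : ℕ → ℝ} (hstep : ∀ k, c k + a ≤ c (k+1))
    {j k : ℕ} {t : ℝ} (hj : lacBump a c j t ≠ 0) (hk : lacBump a c k t ≠ 0) : j = k := by
  have h1 := lacBump_ne_zero ha hj
  have h2 := lacBump_ne_zero ha hk
  rw [abs_lt] at h1 h2
  rcases lt_trichotomy j k with h | h | h
  · have := lacC_gap ha hstep h
    linarith [h1.1, h1.2, h2.1, h2.2]
  · exact h
  · have := lacC_gap ha hstep h
    linarith [h1.1, h1.2, h2.1, h2.2]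

lemma lacF_eq {a : ℝ} (ha : 0 < a) {c : ℕ → ℝ} (hstep : ∀ k, c k + a ≤ c (k+1))
    {k : ℕ} {t : ℝ} (hk : lacBump a c k t ≠ 0) : lacF a c t = lacBump a c k t :=
  tsum_eq_single k fun j hj => by
    by_contra hj0
    exact hj (lacBump_unique ha hstep hj0 hk)

lemma lacF_eq_zero {a : ℝ} {c : ℕ → ℝ} {t : ℝ}
    (h : ∀ k, lacBump a c k t = 0) : lacF a c t = 0 := by
  calc lacF a c t = ∑' (_ : ℕ), (0:ℝ) := tsum_congr h
    _ = 0 := tsum_zero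

lemma lacF_nonneg (a : ℝ) (c : ℕ → ℝ) (t : ℝ) : 0 ≤ lacF a c t :=
  tsum_nonneg fun k => lacBump_nonneg a c k t

lemma lacBump_continuous (a : ℝ) (c : ℕ → ℝ) (k : ℕ) : Continuous (lacBump a c k) :=
  continuous_const.mul (continuous_const.max
    (continuous_const.sub (continuous_const.mul
      ((continuous_id.sub continuous_const).abs))))

lemma lacC_tendsto {a : ℝ} (ha : 0 < a) {c : ℕ → ℝ} (hstep : ∀ k, c k + a ≤ c (k+1)) :
    Tendsto c atTop atTop := by
  have h : ∀ k : ℕ, c 0 + (k : ℝ) * a ≤ c k := by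
    intro k
    induction k with
    | zero => simp
    | succ k ih =>
      have h1 := hstep k
      push_cast
      linarith
  apply tendsto_atTop_mono h
  apply tendsto_atTop_add_const_left
  exact Tendsto.atTop_mul_const ha tendsto_natCast_atTop_atTop

lemma lacF_continuous {a : ℝ} (ha : 0 < a) {c : ℕ → ℝ} (hstep : ∀ k, c k + a ≤ c (k+1)) :
    Continuous (lacF a c) := by
  rw [continuous_iff_continuousAt]
  intro t0
  obtain ⟨K, hK⟩ := Filter.eventually_atTop.mp
    ((lacC_tendsto ha hstep).eventually_gt_atTop (t0 + 1 + a))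
  have hloc : ∀ t ∈ Metric.ball t0 1, lacF a c t = ∑ k ∈ Finset.range K, lacBump a c k t := by
    intro t ht
    apply tsum_eq_sum
    intro k hk
    rw [Finset.mem_range, not_lt] at hk
    by_contra hne
    have h3 := lacBump_ne_zero ha hne
    rw [abs_lt] at h3
    have hck := hK k hk
    have htt : |t - t0| < 1 := by rwa [Metric.mem_ball, Real.dist_eq] at ht
    rw [abs_lt] at htt
    linarith [h3.1, h3.2, htt.1, htt.2]
  have hcont : Continuous fun t => ∑ k ∈ Finset.range K, lacBump a c k t :=
    continuous_finset_sum _ fun k _ => lacBump_continuous a c k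
  apply hcont.continuousAt.congr
  apply Filter.eventuallyEq_of_mem (Metric.ball_mem_nhds t0 one_pos)
  intro t ht
  exact (hloc t ht).symm

lemma lacF_tendsto {a : ℝ} (ha : 0 < a) {c : ℕ → ℝ} (hstep : ∀ k, c k + a ≤ c (k+1)) :
    Tendsto (lacF a c) atTop (nhds 0) := by
  rw [Metric.tendsto_atTop]
  intro ε hε
  obtain ⟨K, hK⟩ := exists_nat_gt (1/ε)
  have h0 : (0:ℝ) < (K:ℝ)+1 := by positivity
  have hKε : ((K:ℝ)+1)⁻¹ < ε := by
    rw [← one_div, div_lt_iff₀ h0]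
    have h1 : 1/ε < (K:ℝ)+1 := hK.trans (lt_add_one _)
    have h2 := mul_lt_mul_of_pos_left h1 hε
    rw [mul_one_div_cancel hε.ne'] at h2
    linarith [h2]
  refine ⟨c K, fun t ht => ?_⟩
  rw [Real.dist_eq, sub_zero, abs_of_nonneg (lacF_nonneg a c t)]
  by_cases hall : ∀ k, lacBump a c k t = 0
  · rw [lacF_eq_zero hall]; exact hε
  · push_neg at hall
    obtain ⟨k, hk⟩ := hall
    rw [lacF_eq ha hstep hk]
    have h3 := lacBump_ne_zero ha hk
    rw [abs_lt] at h3
    have h4 : t < c k := by linarith [h3.2]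
    have h5 : c K < c k := lt_of_le_of_lt ht h4
    have hKk : K < k := (lacC_mono ha hstep).lt_iff_lt.mp h5
    have h6 : lacBump a c k t ≤ ((k:ℝ)+1)⁻¹ := lacBump_le ha c k t
    have h7 : ((k:ℝ)+1)⁻¹ ≤ ((K:ℝ)+1)⁻¹ := by
      apply inv_anti₀ h0
      have : (K:ℝ) ≤ (k:ℝ) := Nat.cast_le.mpr hKk.le
      linarith
    linarith

/-- If `Λ` is asymptotically lacunary then `Λ` is type 2, with a witness
`f ∈ C₀⁺(ℝ)` for which the convergence set contains an interval and the
divergence set contains an interval. -/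
theorem lacunary_implies_type_two
    (lam : ℕ → ℝ) (hmono : StrictMono lam) (hnonneg : ∀ n, 0 ≤ lam n)
    (htop : Tendsto lam atTop atTop)
    (hlac : ∃ a : ℝ, 0 < a ∧ ∀ N : ℝ, ∃ x ≥ N, ∀ i, lam i ∉ Set.Icc x (x + a)) :
    ∃ f : ℝ → ℝ, Continuous f ∧ (∀ x, 0 ≤ f x) ∧
      Tendsto f atTop (nhds 0) ∧
      (∃ a b : ℝ, a < b ∧
        Set.Ioo a b ⊆ {x : ℝ | Summable fun n => f (x + lam n)}) ∧
      (∃ a b : ℝ, a < b ∧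
        Set.Ioo a b ⊆ {x : ℝ | ¬ Summable fun n => f (x + lam n)}) := by
  classical
  obtain ⟨a, ha, hgap⟩ := hlac
  have key : ∀ N : ℝ, ∃ m : ℕ, N < lam m ∧ ∀ n, lam n ∉ Set.Ioo (lam m - a) (lam m) := by
    intro N
    obtain ⟨x, hxN, hx⟩ := hgap (max N (lam 0) + 1)
    have hex : ∃ n, x + a < lam n := (htop.eventually_gt_atTop (x + a)).exists
    refine ⟨Nat.find hex, ?_, ?_⟩
    · have h1 : N ≤ max N (lam 0) := le_max_left _ _
      have h2 := Nat.find_spec hex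
      linarith
    · intro n hn
      rcases hn with ⟨hn1, hn2⟩
      have hfind := Nat.find_spec hex
      have hnm : n < Nat.find hex := hmono.lt_iff_lt.mp hn2
      have hle : ¬ (x + a < lam n) := Nat.find_min hex hnm
      push_neg at hle
      have hnot := hx n
      rw [Set.mem_Icc] at hnot
      push_neg at hnot
      have hlt : lam n < x := by
        by_contra hcon
        push_neg at hcon
        exact absurd (hnot hcon) (not_lt.mpr hle)
      linarith
  choose G hG using key
  let idx : ℕ → ℕ := fun k => Nat.rec (G 0) (fun _ p => G (lam p + a)) k
  have hidxs : ∀ k, idx (k+1) = G (lam (idx k) + a) := fun k => rfl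
  let c : ℕ → ℝ := fun k => lam (idx k)
  have hstep : ∀ k, c k + a ≤ c (k+1) := by
    intro k
    have h1 := (hG (lam (idx k) + a)).1
    show lam (idx k) + a ≤ lam (idx (k+1))
    rw [hidxs k]
    exact h1.le
  have hgapc : ∀ k n, lam n ∉ Set.Ioo (c k - a) (c k) := by
    intro k n
    cases k with
    | zero => exact (hG 0).2 n
    | succ k => exact (hG (lam (idx k) + a)).2 n
  have hidxmono : StrictMono idx := by
    apply strictMono_nat_of_lt_succ
    intro k
    have h1 : c k < c (k+1) := by linarith [hstep k]
    exact hmono.lt_iff_lt.mp h1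
  refine ⟨lacF a c, lacF_continuous ha hstep, lacF_nonneg a c, lacF_tendsto ha hstep,
    ⟨-(a/6), a/6, by linarith, ?_⟩, ⟨-(7*a/12), -(5*a/12), by linarith, ?_⟩⟩
  · intro x hx
    rcases hx with ⟨hx1, hx2⟩
    have hall : ∀ n, lacF a c (x + lam n) = 0 := by
      intro n
      apply lacF_eq_zero
      intro k
      by_contra hne
      have h3 := lacBump_ne_zero ha hne
      rw [abs_lt] at h3
      have hni := hgapc k n
      rw [Set.mem_Ioo] at hni
      push_neg at hni
      have hgt : c k - a < lam n := by linarith [h3.1]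
      have hlt2 : lam n < c k := by linarith [h3.2]
      exact absurd (hni hgt) (not_le.mpr hlt2)
    simp only [Set.mem_setOf_eq]
    have heq : (fun n => lacF a c (x + lam n)) = fun _ => (0:ℝ) := funext hall
    rw [heq]
    exact summable_zero
  · intro x hx
    rcases hx with ⟨hx1, hx2⟩
    simp only [Set.mem_setOf_eq]
    intro hsum
    have hsub : Summable ((fun n => lacF a c (x + lam n)) ∘ idx) :=
      hsum.comp_injective hidxmono.injective
    have hlow : ∀ k : ℕ, 3/4 * ((k:ℝ)+1)⁻¹ ≤ ((fun n => lacF a c (x + lam n)) ∘ idx) k := by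
      intro k
      have habs : |x + c k - (c k - a/2)| < a/12 := by
        have heq2 : x + c k - (c k - a/2) = x + a/2 := by ring
        rw [heq2, abs_lt]
        constructor <;> linarith
      have hlow2 := lacBump_lower ha habs
      have hne : lacBump a c k (x + c k) ≠ 0 := by
        have hpos : (0:ℝ) < 3/4 * ((k:ℝ)+1)⁻¹ := by positivity
        intro h0
        rw [h0] at hlow2
        linarith
      have heq3 := lacF_eq ha hstep hne
      show 3/4 * ((k:ℝ)+1)⁻¹ ≤ lacF a c (x + lam (idx k))
      show 3/4 * ((k:ℝ)+1)⁻¹ ≤ lacF a c (x + c k)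
      rw [heq3]
      exact hlow2
    have hsum2 : Summable (fun k : ℕ => 3/4 * ((k:ℝ)+1)⁻¹) :=
      Summable.of_nonneg_of_le (fun k => by positivity) hlow hsub
    have hsum3 : Summable (fun k : ℕ => ((k:ℝ)+1)⁻¹) := by
      have h := hsum2.mul_left (4/3)
      convert h using 2 with k
      rfl
      ring
    have hsum4 : Summable (fun n : ℕ => ((n:ℝ))⁻¹) := by
      rw [← summable_nat_add_iff 1]
      convert hsum3 using 2 with k
      rfl
      push_cast
      ring
    exact Real.not_summable_natCast_inv hsum4
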